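/- (Convergence of k-NN distance; Lemma 4.) Let X be a random variable taking values in a metric space (𝒳, ρ), and let X_1, ..., X_n be i.i.d. observations of X. Suppose X has local dimension d around a point x ∈ 𝒳. Then there exist constants C, κ > 0 such that, whenever k/n ≤ κ, with probability at least 1 − e^{−k/4}, the distance from x to its k-th nearest neighbor among {X_1, ..., X_n} satisfies ρ(x, X_{π_k}) ≤ C (k/n)^{1/d}, where π orders the X_i by increasing distance to x. -/

import Mathlib

open MeasureTheory Filter Metric

noncomputable section

/-- The local Hölder ball `C^s(Z, z₀; X; L)`: functions `g` with
`dist (g z) (g z₀) ≤ L * (dist z z₀)^s` for all `z`. -/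
def LocHolderBall {Z X : Type*} [PseudoMetricSpace Z] [PseudoMetricSpace X]
    (s L : ℝ) (z0 : Z) (g : Z → X) : Prop :=
  ∀ z, dist (g z) (g z0) ≤ L * dist z z0 ^ s

/-- The global Hölder ball `C^s(Z; X; L)`. -/
def GlobHolderBall {Z X : Type*} [PseudoMetricSpace Z] [PseudoMetricSpace X]
    (s L : ℝ) (g : Z → X) : Prop :=
  ∀ z z', dist (g z) (g z') ≤ L * dist z z' ^ s

/-- A measure `P` on a metric space has local dimension `d` around `x`:
`liminf_{r↓0} P(closedBall x r)/r^d > 0`. -/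
def HasLocalDim {X : Type*} [PseudoMetricSpace X] [MeasurableSpace X]
    (P : Measure X) (x : X) (d : ℝ) : Prop :=
  0 < liminf (fun r : ℝ => (P (closedBall x r)).toReal / r ^ d) (nhdsWithin 0 (Set.Ioi 0))

/-- A random variable `V` on `(Ω, μ)` has local dimension `d` around `x`. -/
def RVHasLocalDim {Ω X : Type*} [MeasurableSpace Ω] [PseudoMetricSpace X]
    (μ : Measure Ω) (V : Ω → X) (x : X) (d : ℝ) : Prop :=
  0 < liminf (fun r : ℝ => (μ {ω | dist (V ω) x ≤ r}).toReal / r ^ d)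
      (nhdsWithin 0 (Set.Ioi 0))

/-- A probability distribution on `ℝ^d` is sub-Gaussian:
`E[exp⟨x, t⟩] ≤ exp(‖t‖₂²/2)` for all `t`. -/
def SubGaussianVec {d : ℕ} (P : Measure (Fin d → ℝ)) : Prop :=
  ∀ t : Fin d → ℝ, ∫ x, Real.exp (∑ j, x j * t j) ∂P ≤ Real.exp ((∑ j, t j ^ 2) / 2)

/-- A probability distribution on `ℝ` is sub-Gaussian. -/
def SubGaussianReal (P : Measure ℝ) : Prop :=
  ∀ t : ℝ, ∫ x, Real.exp (x * t) ∂P ≤ Real.exp (t ^ 2 / 2)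

/-- `v` is a possible value of the `k`-nearest-neighbor regressor of the data
`(X i, Y i)` at the point `x0`: there is an enumeration of the data ordered by
increasing distance of `X i` to `x0` (ties broken arbitrarily), and `v` is the
average of the responses `Y i` over the first `k` data points. -/
def IsKNNValue {ι : Type*} [Fintype ι] {dX : ℕ} (k : ℕ) (x0 : Fin dX → ℝ)
    (X : ι → Fin dX → ℝ) (Y : ι → ℝ) (v : ℝ) : Prop :=
  ∃ e : ι ≃ Fin (Fintype.card ι),
    (∀ i j : ι, e i ≤ e j → dist (X i) x0 ≤ dist (X j) x0) ∧
    v = (k : ℝ)⁻¹ * ∑ i : ι, if ((e i : ℕ) < k) then Y i else 0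

/-- The cube `[0,1]^m` with the sup metric. -/
abbrev Cube (m : ℕ) := Fin m → Set.Icc (0:ℝ) 1

/-- The standard `d`-dimensional bump function
`K_d(x) = exp(1 - 1/(1 - ‖x‖₂²)) 1{‖x‖₂ < 1}`. -/
def bumpFn (d : ℕ) (x : Fin d → ℝ) : ℝ :=
  if (∑ j, x j ^ 2) < 1 then Real.exp (1 - 1 / (1 - ∑ j, x j ^ 2)) else 0

/-- The Hölder seminorm `‖f‖_{C^s} = sup_{z ≠ z'} dist (f z) (f z') / dist z z' ^ s`. -/
def holderSeminorm {Z X : Type*} [PseudoMetricSpace Z] [PseudoMetricSpace X]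
    (s : ℝ) (f : Z → X) : ℝ :=
  ⨆ p : Z × Z, if dist p.1 p.2 = 0 then 0 else dist (f p.1) (f p.2) / dist p.1 p.2 ^ s



lemma lint_bound {𝒳 : Type*} [MeasurableSpace 𝒳] (P : Measure 𝒳) [IsProbabilityMeasure P]
    (S : Set 𝒳) (f : 𝒳 → ENNReal) (hfm : Measurable f) (a b : ENNReal) (hab : a ≤ b)
    (ha : ∀ x ∈ S, f x ≤ a) (hb : ∀ x, f x ≤ b) :
    ∫⁻ x, f x ∂P ≤ a + (b - a) * (1 - P S) := by
  have hA : MeasurableSet {x | f x ≤ a} := measurableSet_le hfm measurable_const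
  have hSA : S ⊆ {x | f x ≤ a} := ha
  have hpt : ∀ x, f x ≤ a + ({x | f x ≤ a}ᶜ).indicator (fun _ => b - a) x := by
    intro x
    by_cases hx : f x ≤ a
    · have : ({x | f x ≤ a}ᶜ).indicator (fun _ => b - a) x = 0 :=
        Set.indicator_of_notMem (by simpa using hx) _
      rw [this, add_zero]; exact hx
    · have hmem : x ∈ {x | f x ≤ a}ᶜ := by simpa using hx
      rw [Set.indicator_of_mem hmem, add_tsub_cancel_of_le hab]
      exact hb x
  calc ∫⁻ x, f x ∂P
      ≤ ∫⁻ x, (a + ({x | f x ≤ a}ᶜ).indicator (fun _ => b - a) x) ∂P := lintegral_mono hpt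
    _ = a + (b - a) * P ({x | f x ≤ a}ᶜ) := by
        rw [lintegral_add_left measurable_const, lintegral_const, measure_univ, mul_one,
          lintegral_indicator hA.compl, setLIntegral_const]
    _ ≤ a + (b - a) * (1 - P S) := by
        gcongr
        calc P ({x | f x ≤ a}ᶜ) = 1 - P {x | f x ≤ a} := by
              rw [measure_compl hA (measure_ne_top _ _), measure_univ]
          _ ≤ 1 - P S := tsub_le_tsub_left (measure_mono hSA) 1

open scoped Classical in
lemma knn_key {𝒳 : Type*} [MeasurableSpace 𝒳] (P : Measure 𝒳) [IsProbabilityMeasure P]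
    (S : Set 𝒳) :
    ∀ (n : ℕ) (m : ℕ) (M : Set (Fin n → 𝒳)), MeasurableSet M →
      (∀ xs ∈ M, (∑ i, if xs i ∈ S then 1 else 0 : ℕ) ≤ m) →
      Measure.pi (fun _ : Fin n => P) M ≤ 2 ^ m * (1 - P S / 2) ^ n := by
  intro n
  induction n with
  | zero =>
    intro m M hM _
    calc Measure.pi (fun _ : Fin 0 => P) M ≤ 1 := prob_le_one
    _ = 1 ^ m * (1 - P S / 2) ^ 0 := by simp
    _ ≤ 2 ^ m * (1 - P S / 2) ^ 0 := by gcongr; exact one_le_two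
  | succ n ih =>
    intro m M hM hsub
    set ν := Measure.pi (fun _ : Fin n => P) with hν
    set p := P S with hp
    have hp1 : p ≤ 1 := prob_le_one
    have hptop : p ≠ ⊤ := (hp1.trans_lt ENNReal.one_lt_top).ne
    have hhalf : p / 2 ≤ 1 := (ENNReal.half_le_self).trans hp1
    set e := MeasurableEquiv.piFinSuccAbove (fun _ : Fin (n+1) => 𝒳) 0 with he
    set s := e.symm ⁻¹' M with hs_def
    have hs : MeasurableSet s := e.symm.measurable hM
    have h1 : Measure.pi (fun _ : Fin (n+1) => P) M = (P.prod ν) s := by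
      have hmp := measurePreserving_piFinSuccAbove (fun _ : Fin (n+1) => P) 0
      have h := hmp.measure_preimage hs.nullMeasurableSet
      have hpre : e ⁻¹' s = M := by
        rw [hs_def, Set.preimage_preimage]
        simp
      rw [← hpre]
      exact h
    have h2 : (P.prod ν) s = ∫⁻ x, ν (Prod.mk x ⁻¹' s) ∂P := Measure.prod_apply hs
    set f := fun x => ν (Prod.mk x ⁻¹' s) with hf
    have hfm : Measurable f := measurable_measure_prodMk_left hs
    have hslice_meas : ∀ x : 𝒳, MeasurableSet (Prod.mk x ⁻¹' s) :=
      fun x => measurable_prodMk_left hs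
    have hcount : ∀ (x : 𝒳) (g : Fin n → 𝒳), g ∈ Prod.mk x ⁻¹' s →
        ((if x ∈ S then 1 else 0) + (∑ i, if g i ∈ S then 1 else 0) : ℕ) ≤ m := by
      intro x g hg
      have hmem : e.symm (x, g) ∈ M := hg
      have hle := hsub _ hmem
      have hrw : (∑ i, if (e.symm (x, g)) i ∈ S then 1 else 0 : ℕ)
          = ((if x ∈ S then 1 else 0) + (∑ i, if g i ∈ S then 1 else 0) : ℕ) := by
        rw [Fin.sum_univ_succAbove (fun i => if (e.symm (x, g)) i ∈ S then (1:ℕ) else 0) 0]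
        have e0 : (e.symm (x, g)) 0 = x := by simp [he]
        have ej : ∀ j : Fin n, (e.symm (x, g)) (Fin.succAbove 0 j) = g j := by
          intro j; simp [he]
        simp only [e0, ej]
      rw [hrw] at hle
      exact hle
    set c0 := (1 - p / 2) ^ n with hc0
    have hc0le : c0 ≤ 1 := pow_le_one' (tsub_le_self) n
    have hc0top : c0 ≠ ⊤ := (hc0le.trans_lt ENNReal.one_lt_top).ne
    have hb : ∀ x, f x ≤ 2 ^ m * c0 := by
      intro x
      refine ih m _ (hslice_meas x) fun g hg => ?_
      exact le_trans (Nat.le_add_left _ _) (hcount x g hg)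
    rw [h1, h2]
    rcases m with _ | m'
    · -- m = 0
      have ha : ∀ x ∈ S, f x ≤ 0 := by
        intro x hx
        have : Prod.mk x ⁻¹' s = ∅ := by
          ext g
          simp only [Set.mem_empty_iff_false, iff_false]
          intro hg
          have := hcount x g hg
          simp [hx] at this
        simp [hf, this]
      have hb' : ∀ x, f x ≤ c0 := by intro x; simpa using hb x
      calc ∫⁻ x, f x ∂P ≤ 0 + (c0 - 0) * (1 - p) :=
            lint_bound P S f hfm 0 c0 zero_le ha hb'
        _ = c0 * (1 - p) := by simp
        _ ≤ c0 * (1 - p / 2) := by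
            gcongr
            exact ENNReal.half_le_self
        _ = 2 ^ 0 * (1 - p / 2) ^ (n + 1) := by rw [hc0, pow_succ, pow_zero, one_mul]
    · -- m = m' + 1
      set a := 2 ^ m' * c0 with ha_def
      have hatop : a ≠ ⊤ := ENNReal.mul_ne_top (by simp) hc0top
      have hb2 : (2 : ENNReal) ^ (m' + 1) * c0 = a + a := by
        rw [ha_def, pow_succ]; ring
      have ha : ∀ x ∈ S, f x ≤ a := by
        intro x hx
        refine ih m' _ (hslice_meas x) fun g hg => ?_
        have := hcount x g hg
        simp only [hx, if_true] at this
        omega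
      have hab : a ≤ a + a := le_add_self
      have hba : a + a - a = a := ENNReal.add_sub_cancel_right hatop
      have hp2 : p / 2 + p / 2 = p := ENNReal.add_halves p
      have h2p : (2 : ENNReal) * (1 - p / 2) = 2 - p := by
        have hadd : 2 * (1 - p / 2) + p = 2 := by
          calc 2 * (1 - p / 2) + p = (1 - p/2) + (1 - p/2) + (p/2 + p/2) := by
                rw [two_mul, hp2]
            _ = ((1 - p/2) + p/2) + ((1 - p/2) + p/2) := by ring
            _ = 1 + 1 := by rw [tsub_add_cancel_of_le hhalf]
            _ = 2 := one_add_one_eq_two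
        exact ENNReal.eq_sub_of_add_eq hptop hadd
      have h1p : (1 : ENNReal) + (1 - p) = 2 - p := by
        refine ENNReal.eq_sub_of_add_eq hptop ?_
        rw [add_assoc, tsub_add_cancel_of_le hp1]
        norm_num
      calc ∫⁻ x, f x ∂P ≤ a + (a + a - a) * (1 - p) := by
            refine lint_bound P S f hfm a (a + a) hab ha fun x => ?_
            rw [← hb2]; exact hb x
        _ = a * (1 + (1 - p)) := by rw [hba]; ring
        _ = a * (2 - p) := by rw [h1p]
        _ = a * (2 * (1 - p / 2)) := by rw [h2p]
        _ = 2 ^ (m' + 1) * (1 - p / 2) ^ (n + 1) := by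
            rw [ha_def, hc0, pow_succ, pow_succ]; ring


open scoped Classical in
lemma knn_count_le {𝒳 : Type*} [MetricSpace 𝒳] (x : 𝒳) (n k : ℕ) (hk : 0 < k) (hkn : k ≤ n)
    (xs : Fin n → 𝒳) (t : ℝ) (π : Equiv.Perm (Fin n))
    (hsort : ∀ i j : Fin n, i ≤ j → dist x (xs (π i)) ≤ dist x (xs (π j)))
    (hbig : t < dist x (xs (π ⟨k - 1, by exact Nat.lt_of_lt_of_le (Nat.sub_lt hk Nat.one_pos) hkn⟩))) :
    (∑ i, if xs i ∈ closedBall x t then 1 else 0 : ℕ) ≤ k - 1 := by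
  have hperm : (∑ i, if xs i ∈ closedBall x t then 1 else 0 : ℕ)
      = ∑ i, if xs (π i) ∈ closedBall x t then 1 else 0 := (Equiv.sum_comp π _).symm
  rw [hperm]
  have hle : ∀ i : Fin n, (if xs (π i) ∈ closedBall x t then (1:ℕ) else 0)
      ≤ (if (i : ℕ) < k - 1 then 1 else 0) := by
    intro i
    by_cases hi : xs (π i) ∈ closedBall x t
    · simp only [hi, if_true]
      by_cases hik : (i : ℕ) < k - 1
      · simp [hik]
      · exfalso
        have hle' : (⟨k - 1, by omega⟩ : Fin n) ≤ i := by
          rw [Fin.le_def]; simpa using Nat.le_of_not_lt hik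
        have hd := hsort _ i hle'
        rw [mem_closedBall, dist_comm] at hi
        linarith
    · simp [hi]
  have hcard : ((Finset.univ : Finset (Fin n)).filter fun i => i.1 < k - 1).card
      ≤ (Finset.range (k - 1)).card := by
    apply Finset.card_le_card_of_injOn (fun i : Fin n => i.1)
    · intro i hi
      simp only [Finset.coe_filter, Finset.mem_filter, Set.mem_setOf_eq] at hi
      simpa using hi.2
    · intro a _ b _ h
      exact Fin.val_injective h
  calc (∑ i, if xs (π i) ∈ closedBall x t then 1 else 0 : ℕ)
      ≤ ∑ i : Fin n, if i.1 < k - 1 then 1 else 0 := Finset.sum_le_sum fun i _ => hle i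
    _ = ((Finset.univ : Finset (Fin n)).filter fun i => i.1 < k - 1).card :=
        (Finset.card_filter _ _).symm
    _ ≤ k - 1 := by simpa using hcard

lemma knn_numeric (k n : ℕ) (hk : 1 ≤ k) (hkn : k ≤ n) (p' : ℝ)
    (hp : 2 * k / n ≤ p') (hp1 : p' ≤ 1) :
    (2 : ℝ) ^ (k - 1) * (1 - p' / 2) ^ n ≤ Real.exp (-(k : ℝ) / 4) := by
  have hn : (0 : ℝ) < n := by
    have : 1 ≤ n := hk.trans hkn
    exact_mod_cast Nat.lt_of_lt_of_le Nat.zero_lt_one this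
  have hkR : (1:ℝ) ≤ (k:ℝ) := by exact_mod_cast hk
  have hknR : (k : ℝ) ≤ n := by exact_mod_cast hkn
  have hdiv : (k : ℝ) / n ≤ p' / 2 := by
    rw [div_le_iff₀ hn] at hp
    rw [div_le_div_iff₀ hn two_pos]
    linarith
  have h1 : 1 - p' / 2 ≤ 1 - (k : ℝ) / n := by linarith
  have h0 : (0 : ℝ) ≤ 1 - p' / 2 := by linarith
  have h0' : (0 : ℝ) ≤ 1 - (k : ℝ) / n := by
    have : (k : ℝ) / n ≤ 1 := by rw [div_le_one hn]; exact hknR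
    linarith
  have h2 : (1 - p' / 2) ^ n ≤ (1 - (k : ℝ) / n) ^ n := pow_le_pow_left₀ h0 h1 n
  have h3 : (1 - (k : ℝ) / n) ≤ Real.exp (-((k : ℝ) / n)) := by
    have := Real.add_one_le_exp (-((k : ℝ) / n))
    linarith
  have h3n : (1 - (k : ℝ) / n) ^ n ≤ Real.exp (-((k : ℝ) / n)) ^ n := pow_le_pow_left₀ h0' h3 n
  have h4 : Real.exp (-((k : ℝ) / n)) ^ n = Real.exp (-(k : ℝ)) := by
    rw [← Real.exp_nat_mul]
    congr 1
    field_simp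
  have h5 : (2 : ℝ) ^ (k - 1) ≤ (2 : ℝ) ^ k := pow_le_pow_right₀ one_le_two (Nat.sub_le k 1)
  have h6 : (2 : ℝ) ^ k = Real.exp ((k : ℝ) * Real.log 2) := by
    rw [Real.exp_nat_mul, Real.exp_log two_pos]
  calc (2 : ℝ) ^ (k - 1) * (1 - p' / 2) ^ n
      ≤ (2 : ℝ) ^ k * Real.exp (-(k : ℝ)) := by
        rw [← h4]
        apply mul_le_mul h5 (h2.trans h3n) (by positivity) (by positivity)
    _ = Real.exp ((k : ℝ) * Real.log 2 - (k : ℝ)) := by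
        rw [h6, ← Real.exp_add]; ring_nf
    _ ≤ Real.exp (-(k : ℝ) / 4) := by
        apply Real.exp_le_exp.2
        nlinarith [Real.log_two_lt_d9, hkR]


/-- **Lemma 4 (Convergence of k-NN distance).**
If `X₁, ..., Xₙ` are i.i.d. with law `P` having local dimension `d` around `x`, then there
are constants `C, κ > 0` such that whenever `k/n ≤ κ`, with probability at least
`1 - exp(-k/4)`, the distance from `x` to its `k`-th nearest neighbor among the sample
is at most `C (k/n)^{1/d}`. -/
theorem knn_distance_convergence
    {𝒳 : Type*} [MetricSpace 𝒳] [MeasurableSpace 𝒳]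
    (P : Measure 𝒳) [IsProbabilityMeasure P] (x : 𝒳) (d : ℝ)
    (hdim : HasLocalDim P x d) :
    ∃ C κ : ℝ, 0 < C ∧ 0 < κ ∧
      ∀ (n k : ℕ) (hk : 0 < k) (hkn : k ≤ n), (k : ℝ) / n ≤ κ →
        1 - Real.exp (-(k : ℝ) / 4) ≤
          ((Measure.pi fun _ : Fin n => P)
            {xs | ∀ π : Equiv.Perm (Fin n),
              (∀ i j : Fin n, i ≤ j → dist x (xs (π i)) ≤ dist x (xs (π j))) →
              dist x (xs (π ⟨k - 1, by omega⟩)) ≤ C * ((k : ℝ) / n) ^ (1 / d)}).toReal := by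

  classical
  -- Step 1: extract constants from the liminf hypothesis
  obtain ⟨c, hc, r0, hr0, hcr⟩ : ∃ c > 0, ∃ r0 > 0, ∀ r : ℝ, 0 < r → r < r0 →
      c * r ^ d ≤ (P (closedBall x r)).toReal := by
    set f : ℝ → ℝ := fun r => (P (closedBall x r)).toReal / r ^ d with hfd
    have hbdd : IsBoundedUnder (· ≥ ·) (nhdsWithin (0:ℝ) (Set.Ioi 0)) f :=
      isBoundedUnder_of_eventually_ge (a := 0) (by
        filter_upwards [self_mem_nhdsWithin] with r hr
        have hr' : (0:ℝ) < r := hr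
        have h1 : (0:ℝ) ≤ (P (closedBall x r)).toReal := ENNReal.toReal_nonneg
        have h2 : (0:ℝ) < r ^ d := Real.rpow_pos_of_pos hr' d
        positivity)
    have hev : ∀ᶠ r in nhdsWithin (0:ℝ) (Set.Ioi 0),
        liminf f (nhdsWithin 0 (Set.Ioi 0)) / 2 < f r :=
      eventually_lt_of_lt_liminf (half_lt_self hdim) hbdd
    rw [eventually_nhdsWithin_iff, Metric.eventually_nhds_iff] at hev
    obtain ⟨ε, hε, hball⟩ := hev
    refine ⟨_, half_pos hdim, ε, hε, fun r hr hrε => ?_⟩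
    have hb := hball (y := r) (by simpa [Real.dist_eq, abs_of_pos hr] using hrε) hr
    have hrd : (0:ℝ) < r ^ d := Real.rpow_pos_of_pos hr d
    rw [lt_div_iff₀ hrd] at hb
    exact hb.le
  -- Step 2: d is nonnegative
  have hd0 : 0 ≤ d := by
    by_contra hdneg
    push_neg at hdneg
    set B := (c / 2) ^ (-d)⁻¹ with hBdef
    have hB : (0:ℝ) < B := Real.rpow_pos_of_pos (half_pos hc) _
    set r := min (r0 / 2) B with hrdef
    have hrpos : 0 < r := lt_min (half_pos hr0) hB
    have hrlt : r < r0 := (min_le_left _ _).trans_lt (half_lt_self hr0)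
    have hrd : (0:ℝ) < r ^ d := Real.rpow_pos_of_pos hrpos d
    have h1 : c * r ^ d ≤ 1 := by
      refine (hcr r hrpos hrlt).trans ?_
      calc (P (closedBall x r)).toReal ≤ (1 : ENNReal).toReal :=
            ENNReal.toReal_mono ENNReal.one_ne_top prob_le_one
        _ = 1 := ENNReal.toReal_one
    have h2 : r ^ (-d) ≤ c / 2 := by
      have hrB : r ≤ B := min_le_right _ _
      have hmono : r ^ (-d) ≤ B ^ (-d) :=
        Real.rpow_le_rpow hrpos.le hrB (by linarith)
      have hBe : B ^ (-d) = c / 2 := by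
        rw [hBdef, ← Real.rpow_mul (half_pos hc).le,
          inv_mul_cancel₀ (by linarith : -d ≠ 0), Real.rpow_one]
      linarith [hBe ▸ hmono]
    have h3 : c ≤ r ^ (-d) := by
      rw [Real.rpow_neg hrpos.le, inv_eq_one_div, le_div_iff₀ hrd]
      exact h1
    linarith
  -- Step 3: choose the constants C and κ
  obtain ⟨C, hCpos, κ, hκpos, H⟩ : ∃ C > 0, ∃ κ > 0, ∀ n k : ℕ, 0 < k → k ≤ n →
      (k:ℝ)/n ≤ κ → 2 * k / n ≤ (P (closedBall x (C * ((k:ℝ)/n) ^ (1/d)))).toReal := by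
    rcases eq_or_lt_of_le hd0 with heq | hdpos
    · -- d = 0
      refine ⟨r0 / 2, half_pos hr0, c / 2, half_pos hc, fun n k hk hkn hκ => ?_⟩
      have hn0 : (0:ℝ) < n := by
        have h1 : 0 < n := lt_of_lt_of_le hk hkn
        exact_mod_cast h1
      have hrad : (r0/2) * ((k:ℝ)/n) ^ (1/d) = r0/2 := by
        rw [← heq]
        norm_num
      rw [hrad]
      have hPr := hcr (r0/2) (half_pos hr0) (half_lt_self hr0)
      rw [← heq, Real.rpow_zero, mul_one] at hPr
      have hkc : 2 * (k:ℝ) / n ≤ c := by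
        rw [mul_div_assoc]
        linarith
      linarith
    · -- 0 < d
      set C := (2 / c) ^ (1 / d) with hCdef
      have hCpos : 0 < C := Real.rpow_pos_of_pos (by positivity) _
      set κ := (r0 / (2 * C)) ^ d with hκdef
      have hκpos : 0 < κ := Real.rpow_pos_of_pos (by positivity) _
      refine ⟨C, hCpos, κ, hκpos, fun n k hk hkn hκle => ?_⟩
      have hn0 : (0:ℝ) < n := by
        have h1 : 0 < n := lt_of_lt_of_le hk hkn
        exact_mod_cast h1
      have hk0 : (0:ℝ) < k := by exact_mod_cast hk
      have hq : (0:ℝ) < (k:ℝ)/n := by positivity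
      set u := ((k:ℝ)/n) ^ (1/d) with hu
      have hupos : 0 < u := Real.rpow_pos_of_pos hq _
      have huB : u ≤ r0 / (2 * C) := by
        have h1 : u ≤ κ ^ (1/d) := Real.rpow_le_rpow hq.le hκle (by positivity)
        have h2 : κ ^ (1/d) = r0 / (2*C) := by
          rw [hκdef, ← Real.rpow_mul (by positivity), mul_one_div,
            div_self (ne_of_gt hdpos), Real.rpow_one]
        linarith [h2 ▸ h1]
      have htpos : 0 < C * u := by positivity
      have htlt : C * u < r0 := by
        have hle1 : C * u ≤ C * (r0 / (2*C)) := by nlinarith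
        have h3 : C * (r0/(2*C)) = r0/2 := by field_simp
        nlinarith [half_lt_self hr0]
      have hPD := hcr (C*u) htpos htlt
      have htd : c * (C*u) ^ d = 2 * k / n := by
        rw [Real.mul_rpow hCpos.le hupos.le]
        have hCd : C ^ d = 2 / c := by
          rw [hCdef, ← Real.rpow_mul (by positivity), one_div,
            inv_mul_cancel₀ (ne_of_gt hdpos), Real.rpow_one]
        have hud : u ^ d = (k:ℝ)/n := by
          rw [hu, ← Real.rpow_mul hq.le, one_div,
            inv_mul_cancel₀ (ne_of_gt hdpos), Real.rpow_one]
        rw [hCd, hud]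
        field_simp
      linarith [htd ▸ hPD]
  -- Step 4: main argument
  refine ⟨C, κ, hCpos, hκpos, fun n k hk hkn hκle => ?_⟩
  set μ := (Measure.pi fun _ : Fin n => P) with hμ
  haveI : IsProbabilityMeasure μ := by rw [hμ]; infer_instance
  set t := C * ((k:ℝ)/n) ^ (1/d) with ht
  set S := closedBall x t with hSdef
  have main : ∀ T : Set (Fin n → 𝒳),
      (∀ xs, xs ∉ T → ∃ π : Equiv.Perm (Fin n),
        (∀ i j : Fin n, i ≤ j → dist x (xs (π i)) ≤ dist x (xs (π j))) ∧
        t < dist x (xs (π ⟨k - 1, by omega⟩))) →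
      1 - Real.exp (-(k:ℝ)/4) ≤ (μ T).toReal := by
    intro T hT
    set V := toMeasurable μ T with hV
    have hVm : MeasurableSet V := measurableSet_toMeasurable μ T
    have hsub : ∀ xs ∈ Vᶜ, (∑ i, if xs i ∈ S then 1 else 0 : ℕ) ≤ k - 1 := by
      intro xs hxs
      have hxT : xs ∉ T := fun h => hxs (subset_toMeasurable μ T h)
      obtain ⟨π, hsort, hgt⟩ := hT xs hxT
      exact knn_count_le x n k hk hkn xs t π hsort hgt
    have hbound := knn_key P S n (k-1) Vᶜ hVm.compl hsub
    have hhalf : P S / 2 ≤ 1 := le_trans ENNReal.half_le_self prob_le_one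
    have hp1 : (P S).toReal ≤ 1 := by
      calc (P S).toReal ≤ (1:ENNReal).toReal :=
            ENNReal.toReal_mono ENNReal.one_ne_top prob_le_one
        _ = 1 := ENNReal.toReal_one
    have hp2 : 2 * (k:ℝ) / n ≤ (P S).toReal := H n k hk hkn hκle
    have hfin : ((2:ENNReal) ^ (k-1) * (1 - P S / 2) ^ n) ≠ ⊤ := by
      apply ENNReal.mul_ne_top
      · exact ENNReal.pow_ne_top (by simp)
      · exact ENNReal.pow_ne_top ((tsub_le_self.trans_lt ENNReal.one_lt_top).ne)
    have htoReal : ((2:ENNReal) ^ (k-1) * (1 - P S / 2) ^ n).toReal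
        = 2 ^ (k-1) * (1 - (P S).toReal / 2) ^ n := by
      rw [ENNReal.toReal_mul, ENNReal.toReal_pow, ENNReal.toReal_pow,
        ENNReal.toReal_sub_of_le hhalf ENNReal.one_ne_top, ENNReal.toReal_div]
      norm_num
    have hVc : (μ Vᶜ).toReal ≤ Real.exp (-(k:ℝ)/4) := by
      calc (μ Vᶜ).toReal ≤ ((2:ENNReal) ^ (k-1) * (1 - P S / 2) ^ n).toReal :=
            ENNReal.toReal_mono hfin hbound
        _ = 2 ^ (k-1) * (1 - (P S).toReal / 2) ^ n := htoReal
        _ ≤ Real.exp (-(k:ℝ)/4) := knn_numeric k n hk hkn (P S).toReal hp2 hp1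
    have hsum : (μ V).toReal + (μ Vᶜ).toReal = 1 := by
      rw [← ENNReal.toReal_add (measure_ne_top _ _) (measure_ne_top _ _),
        measure_add_measure_compl hVm, measure_univ, ENNReal.toReal_one]
    have hμT : μ T = μ V := (measure_toMeasurable T).symm
    rw [hμT]
    linarith
  refine main _ fun xs hxs => ?_
  simp only [Set.mem_setOf_eq] at hxs
  push_neg at hxs
  obtain ⟨π, hsort, hgt⟩ := hxs
  exact ⟨π, hsort, hgt⟩

end
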